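/- Let X be an m×n real matrix with nonnegative entries whose columns each sum to 1 (Σ_{j=1}^m X_{j i} = 1 for every i), let Q_A be a k×m real matrix, and define Q_Y := Q_A X (the harmonic extension). Let D_A be the m×m diagonal matrix whose j-th diagonal entry is Σ_{i=1}^n X_{j i}. Then Σ_{i=1}^n Σ_{j=1}^m X_{j i} ‖q_i − p_j‖² = trace(Q_A (D_A − X Xᵀ) Q_Aᵀ), where q_i is the i-th column of Q_Y and p_j the j-th column of Q_A. -/

import Mathlib

open Matrix

lemma aux_scalar {m n : ℕ} (X : Matrix (Fin m) (Fin n) ℝ)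
    (hcol : ∀ i, ∑ j, X j i = 1) (p : Fin m → ℝ) :
    ∑ i, ∑ j, X j i * ((∑ j', X j' i * p j') - p j) ^ 2
      = ∑ j, (∑ i, X j i) * p j ^ 2 - ∑ i, (∑ j, X j i * p j) ^ 2 := by
  have h1 : ∀ i, ∑ j, X j i * ((∑ j', X j' i * p j') - p j) ^ 2
      = ∑ j, X j i * p j ^ 2 - (∑ j, X j i * p j) ^ 2 := by
    intro i
    set q := ∑ j', X j' i * p j' with hq
    calc ∑ j, X j i * (q - p j) ^ 2
        = ∑ j, (X j i * q ^ 2 - 2 * q * (X j i * p j) + X j i * p j ^ 2) :=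
          Finset.sum_congr rfl fun j _ => by ring
      _ = ((∑ j, X j i) * q ^ 2 - 2 * q * (∑ j, X j i * p j)) + ∑ j, X j i * p j ^ 2 := by
          rw [Finset.sum_add_distrib, Finset.sum_sub_distrib, ← Finset.sum_mul, ← Finset.mul_sum]
      _ = ∑ j, X j i * p j ^ 2 - (∑ j, X j i * p j) ^ 2 := by
          rw [hcol i, ← hq]; ring
  calc ∑ i, ∑ j, X j i * ((∑ j', X j' i * p j') - p j) ^ 2
      = ∑ i, (∑ j, X j i * p j ^ 2 - (∑ j, X j i * p j) ^ 2) :=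
        Finset.sum_congr rfl fun i _ => h1 i
    _ = ∑ i, ∑ j, X j i * p j ^ 2 - ∑ i, (∑ j, X j i * p j) ^ 2 := Finset.sum_sub_distrib _ _
    _ = ∑ j, (∑ i, X j i) * p j ^ 2 - ∑ i, (∑ j, X j i * p j) ^ 2 := by
        rw [Finset.sum_comm]
        exact congrArg (· - _) (Finset.sum_congr rfl fun j _ => (Finset.sum_mul _ _ _).symm)

theorem harmonic_embedding_schur_quadratic_form
    {m n k : ℕ} (X : Matrix (Fin m) (Fin n) ℝ)
    (hX : ∀ j i, 0 ≤ X j i)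
    (hcol : ∀ i, ∑ j, X j i = 1)
    (QA : Matrix (Fin k) (Fin m) ℝ)
    (QY : Matrix (Fin k) (Fin n) ℝ) (hQY : QY = QA * X)
    (DA : Matrix (Fin m) (Fin m) ℝ) (hDA : DA = Matrix.diagonal fun j => ∑ i, X j i) :
    ∑ i, ∑ j, X j i * (∑ l, (QY l i - QA l j) ^ 2) =
      Matrix.trace (QA * (DA - X * Xᵀ) * QAᵀ) := by
  subst hQY hDA
  set D : Matrix (Fin m) (Fin m) ℝ := Matrix.diagonal fun j => ∑ i, X j i with hD
  -- RHS computation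
  have hsplit : QA * (D - X * Xᵀ) * QAᵀ = QA * D * QAᵀ - (QA * X) * (QA * X)ᵀ := by
    rw [Matrix.mul_sub, Matrix.sub_mul, Matrix.transpose_mul, ← Matrix.mul_assoc,
      Matrix.mul_assoc (QA * X)]
  have rhs_eq : Matrix.trace (QA * (D - X * Xᵀ) * QAᵀ)
      = ∑ l, (∑ j, (∑ i, X j i) * QA l j ^ 2 - ∑ i, ((QA * X) l i) ^ 2) := by
    rw [hsplit, Matrix.trace_sub]
    have t1 : Matrix.trace (QA * D * QAᵀ) = ∑ l, ∑ j, (∑ i, X j i) * QA l j ^ 2 := by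
      simp only [hD, Matrix.trace, Matrix.diag, Matrix.mul_apply, Matrix.mul_diagonal,
        Matrix.transpose_apply]
      refine Finset.sum_congr rfl fun l _ => Finset.sum_congr rfl fun j _ => ?_
      simp only [Matrix.diagonal_apply, mul_ite, mul_zero, Finset.sum_ite_eq, Finset.sum_ite_eq', Finset.mem_univ, if_true]
      ring
    have t2 : Matrix.trace ((QA * X) * (QA * X)ᵀ) = ∑ l, ∑ i, ((QA * X) l i) ^ 2 := by
      simp only [Matrix.trace, Matrix.diag, Matrix.mul_apply, Matrix.transpose_apply, sq]
    rw [t1, t2, ← Finset.sum_sub_distrib]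
  rw [rhs_eq]
  -- LHS computation
  calc ∑ i, ∑ j, X j i * (∑ l, ((QA * X) l i - QA l j) ^ 2)
      = ∑ i, ∑ j, ∑ l, X j i * ((QA * X) l i - QA l j) ^ 2 := by
        exact Finset.sum_congr rfl fun i _ => Finset.sum_congr rfl fun j _ => Finset.mul_sum _ _ _
    _ = ∑ i, ∑ l, ∑ j, X j i * ((QA * X) l i - QA l j) ^ 2 :=
        Finset.sum_congr rfl fun i _ => Finset.sum_comm
    _ = ∑ l, ∑ i, ∑ j, X j i * ((QA * X) l i - QA l j) ^ 2 := Finset.sum_comm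
    _ = ∑ l, (∑ j, (∑ i, X j i) * QA l j ^ 2 - ∑ i, ((QA * X) l i) ^ 2) := by
        refine Finset.sum_congr rfl fun l _ => ?_
        have key := aux_scalar X hcol (fun j => QA l j)
        have hmx : ∀ i, (QA * X) l i = ∑ j', X j' i * QA l j' := by
          intro i
          rw [Matrix.mul_apply]
          exact Finset.sum_congr rfl fun j' _ => mul_comm _ _
        calc ∑ i, ∑ j, X j i * ((QA * X) l i - QA l j) ^ 2
            = ∑ i, ∑ j, X j i * ((∑ j', X j' i * QA l j') - QA l j) ^ 2 :=
              Finset.sum_congr rfl fun i _ => Finset.sum_congr rfl fun j _ => by rw [hmx i]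
          _ = ∑ j, (∑ i, X j i) * QA l j ^ 2 - ∑ i, (∑ j, X j i * QA l j) ^ 2 := key
          _ = ∑ j, (∑ i, X j i) * QA l j ^ 2 - ∑ i, ((QA * X) l i) ^ 2 := by
              congr 1
              exact Finset.sum_congr rfl fun i _ => by rw [hmx i]
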